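/- Let A be a real symmetric n×n matrix with spectral decomposition given by distinct real eigenvalues θ_1,…,θ_m and idempotents E_1,…,E_m. Suppose P and Q are real density matrices and there is perfect state transfer from P to Q at time t, i.e. U(t)·P·U(−t) = Q. Then: (a) E_r·Q·E_r = E_r·P·E_r for every r; (b) if t·(θ_r − θ_s) is not an integer multiple of π, then E_r·P·E_s = 0 and E_r·Q·E_s = 0; (c) for every pair (r,s) there is a sign ε ∈ {1,−1} such that E_r·Q·E_s = ε·E_r·P·E_s. -/

import Mathlib

open Matrix
open scoped ComplexOrder

/-- The transition matrix `U(t) = exp(itA)`. -/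
noncomputable def U {n : ℕ} (A : Matrix (Fin n) (Fin n) ℂ) (t : ℝ) :
    Matrix (Fin n) (Fin n) ℂ :=
  NormedSpace.exp (((t : ℂ) * Complex.I) • A)

theorem exp_smul_mul_eig {n : ℕ} (M E : Matrix (Fin n) (Fin n) ℂ) (c θ : ℂ)
    (h : M * E = θ • E) :
    NormedSpace.exp (c • M) * E = Complex.exp (c * θ) • E := by
  letI : SeminormedRing (Matrix (Fin n) (Fin n) ℂ) := Matrix.linftyOpSemiNormedRing
  letI : NormedRing (Matrix (Fin n) (Fin n) ℂ) := Matrix.linftyOpNormedRing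
  letI : NormedAlgebra ℂ (Matrix (Fin n) (Fin n) ℂ) := Matrix.linftyOpNormedAlgebra
  have hk : ∀ k : ℕ, (c • M) ^ k * E = (c * θ) ^ k • E := by
    intro k
    induction k with
    | zero => simp
    | succ k ih =>
      rw [pow_succ, mul_assoc, smul_mul_assoc, h, Matrix.mul_smul, Matrix.mul_smul, ih,
        smul_smul, smul_smul, pow_succ]
      congr 1
      ring
  have hs : Summable (fun k : ℕ => ((k.factorial : ℂ))⁻¹ * (c * θ) ^ k) := by
    simpa [smul_eq_mul] using NormedSpace.expSeries_summable' (𝕂 := ℂ) (c * θ)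
  have key : ∀ k : ℕ, (((k.factorial : ℂ))⁻¹ • (c • M) ^ k) * E
      = (((k.factorial : ℂ))⁻¹ * (c * θ) ^ k) • E := by
    intro k; rw [smul_mul_assoc, hk, smul_smul]
  simp only [NormedSpace.exp_eq_tsum ℂ]
  erw [← (NormedSpace.expSeries_summable' (𝕂 := ℂ) (c • M)).tsum_mul_right E]
  simp_rw [key]
  rw [hs.tsum_smul_const, Complex.exp_eq_exp_ℂ]
  simp only [NormedSpace.exp_eq_tsum ℂ, smul_eq_mul]

theorem mul_exp_smul_eig {n : ℕ} (M E : Matrix (Fin n) (Fin n) ℂ) (c θ : ℂ)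
    (h : E * M = θ • E) :
    E * NormedSpace.exp (c • M) = Complex.exp (c * θ) • E := by
  letI : SeminormedRing (Matrix (Fin n) (Fin n) ℂ) := Matrix.linftyOpSemiNormedRing
  letI : NormedRing (Matrix (Fin n) (Fin n) ℂ) := Matrix.linftyOpNormedRing
  letI : NormedAlgebra ℂ (Matrix (Fin n) (Fin n) ℂ) := Matrix.linftyOpNormedAlgebra
  have hk : ∀ k : ℕ, E * (c • M) ^ k = (c * θ) ^ k • E := by
    intro k
    induction k with
    | zero => simp
    | succ k ih =>
      rw [pow_succ, ← mul_assoc, ih, smul_mul_assoc, Matrix.mul_smul, h, smul_smul,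
        smul_smul, pow_succ]
      congr 1
      ring
  have hs : Summable (fun k : ℕ => ((k.factorial : ℂ))⁻¹ * (c * θ) ^ k) := by
    simpa [smul_eq_mul] using NormedSpace.expSeries_summable' (𝕂 := ℂ) (c * θ)
  have key : ∀ k : ℕ, E * (((k.factorial : ℂ))⁻¹ • (c • M) ^ k)
      = (((k.factorial : ℂ))⁻¹ * (c * θ) ^ k) • E := by
    intro k; rw [Matrix.mul_smul, hk, smul_smul]
  simp only [NormedSpace.exp_eq_tsum ℂ]
  erw [← (NormedSpace.expSeries_summable' (𝕂 := ℂ) (c • M)).tsum_mul_left E]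
  simp_rw [key]
  rw [hs.tsum_smul_const, Complex.exp_eq_exp_ℂ]
  simp only [NormedSpace.exp_eq_tsum ℂ, smul_eq_mul]

/-- A matrix with real entries equals its entrywise conjugate. -/
theorem real_map_conj {n : ℕ} {M : Matrix (Fin n) (Fin n) ℂ}
    (h : ∀ i j, (M i j).im = 0) : M.map (starRingEnd ℂ) = M := by
  ext i j
  simp [Matrix.map_apply, Complex.ext_iff, h i j]

/-- If `A` is real symmetric with spectral decomposition
`A = ∑ θ_r • E_r`, `P` and `Q` are real density matrices, and there is perfect
state transfer from `P` to `Q` at time `t`, then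
(a) `E_r·Q·E_r = E_r·P·E_r` for all `r`;
(b) if `t(θ_r − θ_s)` is not an integer multiple of `π`, then
    `E_r·P·E_s = 0` and `E_r·Q·E_s = 0`;
(c) for every pair `(r,s)` there is a sign `ε = ±1` with `E_r·Q·E_s = ε·E_r·P·E_s`. -/
theorem stmt_3 {n m : ℕ} (hn : 1 ≤ n)
    (A : Matrix (Fin n) (Fin n) ℂ)
    (hAreal : ∀ i j, (A i j).im = 0) (hAsym : Aᵀ = A)
    (θ : Fin m → ℝ) (hθ : Function.Injective θ)
    (E : Fin m → Matrix (Fin n) (Fin n) ℂ)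
    (hE0 : ∀ r, E r ≠ 0)
    (hEherm : ∀ r, (E r).IsHermitian)
    (hEmul : ∀ r s : Fin m, E r * E s = if r = s then E r else 0)
    (hEsum : ∑ r, E r = 1)
    (hspec : A = ∑ r, (θ r : ℂ) • E r)
    (P Q : Matrix (Fin n) (Fin n) ℂ)
    (hP : P.PosSemidef) (hPtr : P.trace = 1) (hPreal : ∀ i j, (P i j).im = 0)
    (hQ : Q.PosSemidef) (hQtr : Q.trace = 1) (hQreal : ∀ i j, (Q i j).im = 0)
    (t : ℝ) (hpst : U A t * P * U A (-t) = Q) :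
    (∀ r : Fin m, E r * Q * E r = E r * P * E r) ∧
      (∀ r s : Fin m, (¬ ∃ k : ℤ, t * (θ r - θ s) = k * Real.pi) →
        E r * P * E s = 0 ∧ E r * Q * E s = 0) ∧
      (∀ r s : Fin m, ∃ ε : ℝ, (ε = 1 ∨ ε = -1) ∧
        E r * Q * E s = (ε : ℂ) • (E r * P * E s)) := by
  -- eigen-relations
  have hAE : ∀ s, A * E s = (θ s : ℂ) • E s := by
    intro s
    rw [hspec, Finset.sum_mul]
    rw [Finset.sum_eq_single s]
    · rw [smul_mul_assoc, hEmul, if_pos rfl]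
    · intro r _ hrs
      rw [smul_mul_assoc, hEmul, if_neg hrs, smul_zero]
    · simp
  have hEA : ∀ r, E r * A = (θ r : ℂ) • E r := by
    intro r
    rw [hspec, Finset.mul_sum]
    rw [Finset.sum_eq_single r]
    · rw [Matrix.mul_smul, hEmul, if_pos rfl]
    · intro s _ hsr
      rw [Matrix.mul_smul, hEmul, if_neg (Ne.symm hsr), smul_zero]
    · simp
  -- conjugation basics
  have hcjA : A.map (starRingEnd ℂ) = A := real_map_conj hAreal
  have hcj_smul : ∀ (x : ℂ) (X : Matrix (Fin n) (Fin n) ℂ),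
      ((x • X).map (starRingEnd ℂ)) = (starRingEnd ℂ x) • X.map (starRingEnd ℂ) := by
    intro x X
    ext i j
    simp [Matrix.map_apply]
  -- the idempotents are real
  have hEreal : ∀ s, (E s).map (starRingEnd ℂ) = E s := by
    intro s
    set F := (E s).map (starRingEnd ℂ) with hF
    have hAF : A * F = (θ s : ℂ) • F := by
      have h := congrArg (fun X => X.map (starRingEnd ℂ)) (hAE s)
      simp only [Matrix.map_mul, hcjA, hcj_smul, Complex.conj_ofReal] at h
      rw [hF]
      exact h
    have hFA : F * A = (θ s : ℂ) • F := by
      have h := congrArg (fun X => X.map (starRingEnd ℂ)) (hEA s)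
      simp only [Matrix.map_mul, hcjA, hcj_smul, Complex.conj_ofReal] at h
      rw [hF]
      exact h
    have hEF : ∀ r, r ≠ s → E r * F = 0 := by
      intro r hrs
      have h1 : (θ r : ℂ) • (E r * F) = (θ s : ℂ) • (E r * F) := by
        calc (θ r : ℂ) • (E r * F) = (E r * A) * F := by rw [hEA, smul_mul_assoc]
          _ = E r * (A * F) := by rw [mul_assoc]
          _ = (θ s : ℂ) • (E r * F) := by rw [hAF, Matrix.mul_smul]
      have h2 : ((θ r : ℂ) - θ s) • (E r * F) = 0 := by
        rw [sub_smul, h1, sub_self]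
      have h3 : (θ r : ℂ) - θ s ≠ 0 := by
        simp only [ne_eq, sub_eq_zero]
        exact_mod_cast fun h => hrs (hθ h)
      have := congrArg (fun X => ((θ r : ℂ) - θ s)⁻¹ • X) h2
      simpa [smul_smul, inv_mul_cancel₀ h3] using this
    have hFE : ∀ r, r ≠ s → F * E r = 0 := by
      intro r hrs
      have h1 : (θ r : ℂ) • (F * E r) = (θ s : ℂ) • (F * E r) := by
        calc (θ r : ℂ) • (F * E r) = F * (A * E r) := by rw [hAE, Matrix.mul_smul]
          _ = (F * A) * E r := by rw [mul_assoc]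
          _ = (θ s : ℂ) • (F * E r) := by rw [hFA, smul_mul_assoc]
      have h2 : ((θ r : ℂ) - θ s) • (F * E r) = 0 := by
        rw [sub_smul, h1, sub_self]
      have h3 : (θ r : ℂ) - θ s ≠ 0 := by
        simp only [ne_eq, sub_eq_zero]
        exact_mod_cast fun h => hrs (hθ h)
      have := congrArg (fun X => ((θ r : ℂ) - θ s)⁻¹ • X) h2
      simpa [smul_smul, inv_mul_cancel₀ h3] using this
    have hF1 : F = E s * F := by
      conv_lhs => rw [← one_mul F, ← hEsum, Finset.sum_mul]
      rw [Finset.sum_eq_single s]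
      · intro r _ hrs; exact hEF r hrs
      · simp
    have hF2 : F = F * E s := by
      conv_lhs => rw [← mul_one F, ← hEsum, Finset.mul_sum]
      rw [Finset.sum_eq_single s]
      · intro r _ hrs; exact hFE r hrs
      · simp
    have hinv : F.map (starRingEnd ℂ) = E s := by
      rw [hF]; ext i j; simp [Matrix.map_apply]
    have h4 : E s = F * E s := by
      have h := congrArg (fun X => X.map (starRingEnd ℂ)) hF1
      simp only [Matrix.map_mul] at h
      rw [hinv, ← hF] at h
      exact h
    exact hF2.trans h4.symm
  -- key relation: E r * Q * E s = exp(i t (θr - θs)) • (E r * P * E s)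
  have hkey : ∀ r s : Fin m, E r * Q * E s =
      Complex.exp (((t * (θ r - θ s) : ℝ) : ℂ) * Complex.I) • (E r * P * E s) := by
    intro r s
    have h1 : E r * U A t = Complex.exp (((t : ℂ) * Complex.I) * (θ r : ℂ)) • E r :=
      mul_exp_smul_eig A (E r) _ _ (hEA r)
    have h2 : U A (-t) * E s
        = Complex.exp ((((-t : ℝ) : ℂ) * Complex.I) * (θ s : ℂ)) • E s :=
      exp_smul_mul_eig A (E s) _ _ (hAE s)
    have h3 : E r * Q * E s
        = (Complex.exp (((t : ℂ) * Complex.I) * (θ r : ℂ))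
            * Complex.exp ((((-t : ℝ) : ℂ) * Complex.I) * (θ s : ℂ)))
            • (E r * P * E s) := by
      rw [← hpst]
      calc E r * (U A t * P * U A (-t)) * E s
          = (E r * U A t) * P * (U A (-t) * E s) := by
            simp only [mul_assoc]
        _ = (Complex.exp (((t : ℂ) * Complex.I) * (θ r : ℂ)) • E r) * P
              * (Complex.exp ((((-t : ℝ) : ℂ) * Complex.I) * (θ s : ℂ)) • E s) := by
            rw [h1, h2]
        _ = _ := by
            rw [smul_mul_assoc, smul_mul_assoc, Matrix.mul_smul, smul_smul]
    have hx : ((t : ℂ) * Complex.I) * (θ r : ℂ) + (((-t : ℝ) : ℂ) * Complex.I) * (θ s : ℂ)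
        = ((t * (θ r - θ s) : ℝ) : ℂ) * Complex.I := by
      push_cast
      ring
    rw [h3, ← Complex.exp_add, hx]
  -- dichotomy
  have hdich : ∀ r s : Fin m, Real.sin (t * (θ r - θ s)) = 0 ∨
      (E r * P * E s = 0 ∧ E r * Q * E s = 0) := by
    intro r s
    set x : ℝ := t * (θ r - θ s) with hxdef
    set z : ℂ := Complex.exp ((x : ℂ) * Complex.I) with hzdef
    set X : Matrix (Fin n) (Fin n) ℂ := E r * P * E s with hXdef
    have hXreal : X.map (starRingEnd ℂ) = X := by
      rw [hXdef, Matrix.map_mul, Matrix.map_mul, hEreal r, hEreal s, real_map_conj hPreal]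
    have hQreal' : (E r * Q * E s).map (starRingEnd ℂ) = E r * Q * E s := by
      rw [Matrix.map_mul, Matrix.map_mul, hEreal r, hEreal s, real_map_conj hQreal]
    have hconj : E r * Q * E s = (starRingEnd ℂ z) • X := by
      have h := congrArg (fun Y => Y.map (starRingEnd ℂ)) (hkey r s)
      rw [hQreal', hcj_smul, hXreal] at h
      exact h
    have hsub : (z - starRingEnd ℂ z) • X = 0 := by
      rw [sub_smul, ← hkey r s, hconj, sub_self]
    by_cases hsin : Real.sin x = 0
    · left; exact hsin
    · right
      have hz : z - starRingEnd ℂ z ≠ 0 := by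
        intro h
        apply hsin
        have him : z.im = 0 := by
          have h2 := congrArg Complex.im h
          simp only [Complex.sub_im, Complex.conj_im, Complex.zero_im, sub_neg_eq_add] at h2
          linarith
        rw [← Complex.exp_ofReal_mul_I_im x]
        exact him
      have hX0 : X = 0 := by
        have h := congrArg (fun Y => (z - starRingEnd ℂ z)⁻¹ • Y) hsub
        simpa [smul_smul, inv_mul_cancel₀ hz] using h
      refine ⟨hX0, ?_⟩
      rw [hkey r s, ← hXdef, hX0, smul_zero]
  refine ⟨?_, ?_, ?_⟩
  · -- (a)
    intro r
    simpa using hkey r r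
  · -- (b)
    intro r s h
    rcases hdich r s with hsin | hPQ
    · exfalso
      rcases Real.sin_eq_zero_iff.1 hsin with ⟨k, hk⟩
      exact h ⟨k, hk.symm⟩
    · exact hPQ
  · -- (c)
    intro r s
    rcases hdich r s with hsin | ⟨hP0, hQ0⟩
    · refine ⟨Real.cos (t * (θ r - θ s)), Real.sin_eq_zero_iff_cos_eq.1 hsin, ?_⟩
      have hz : Complex.exp (((t * (θ r - θ s) : ℝ) : ℂ) * Complex.I)
          = ((Real.cos (t * (θ r - θ s)) : ℝ) : ℂ) := by
        apply Complex.ext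
        · rw [Complex.exp_ofReal_mul_I_re, Complex.ofReal_re]
        · rw [Complex.exp_ofReal_mul_I_im, Complex.ofReal_im, hsin]
      rw [hkey r s, hz]
    · exact ⟨1, Or.inl rfl, by rw [hQ0, hP0, smul_zero]⟩
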